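/- Let 𝕂 be ℝ or ℂ, V a 𝕂-vector space, r ≥ 1, and let e ∈ 𝕂[S_r] be an idempotent (e·e = e). Then an r-linear map T : V^r → 𝕂 satisfies eT = T if and only if for every r-tuple b ∈ V^r the group algebra element T_b lies in the left ideal 𝕂[S_r]·e* = { x·e* : x ∈ 𝕂[S_r] }. -/

import Mathlib

/-- The action of a group-algebra element `a ∈ 𝕂[S_r]` on an `r`-linear map:
`(aT)(v₁,…,v_r) = Σ_p a(p)·T(v_{p(1)},…,v_{p(r)})`. -/
noncomputable def gaAct {𝕂 : Type*} [RCLike 𝕂] {V : Type*} [AddCommGroup V] [Module 𝕂 V]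
    {r : ℕ} (a : MonoidAlgebra 𝕂 (Equiv.Perm (Fin r)))
    (T : MultilinearMap 𝕂 (fun _ : Fin r => V) 𝕂) :
    MultilinearMap 𝕂 (fun _ : Fin r => V) 𝕂 :=
  ∑ p : Equiv.Perm (Fin r), a.coeff p • T.domDomCongr p

/-- The star map `a = Σ_p a(p)·p ↦ a* = Σ_p a(p)·p⁻¹` on the group algebra. -/
noncomputable def gaStar {𝕂 : Type*} [RCLike 𝕂] {r : ℕ}
    (a : MonoidAlgebra 𝕂 (Equiv.Perm (Fin r))) : MonoidAlgebra 𝕂 (Equiv.Perm (Fin r)) :=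
  ∑ p : Equiv.Perm (Fin r), MonoidAlgebra.single p⁻¹ (a.coeff p)

/-- The group algebra element `T_b = Σ_{p∈S_r} T(v_{p(1)},…,v_{p(r)})·p` induced by an
`r`-linear map `T` and an `r`-tuple `b = (v₁,…,v_r)`. -/
noncomputable def tb {𝕂 : Type*} [RCLike 𝕂] {V : Type*} [AddCommGroup V] [Module 𝕂 V]
    {r : ℕ} (T : MultilinearMap 𝕂 (fun _ : Fin r => V) 𝕂) (b : Fin r → V) :
    MonoidAlgebra 𝕂 (Equiv.Perm (Fin r)) :=
  ∑ p : Equiv.Perm (Fin r), MonoidAlgebra.single p (T (b ∘ p))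

section Aux

variable {𝕂 : Type*} [RCLike 𝕂] {V : Type*} [AddCommGroup V] [Module 𝕂 V] {r : ℕ}

lemma expand_ga (x : MonoidAlgebra 𝕂 (Equiv.Perm (Fin r))) :
    x = ∑ p : Equiv.Perm (Fin r), MonoidAlgebra.single p (x.coeff p) := by
  ext q
  rw [MonoidAlgebra.coeff_sum, Finset.sum_apply']
  simp [Finsupp.single_apply]

lemma gaStar_sum {ι : Type*} (s : Finset ι) (f : ι → MonoidAlgebra 𝕂 (Equiv.Perm (Fin r))) :
    gaStar (∑ i ∈ s, f i) = ∑ i ∈ s, gaStar (f i) := by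
  unfold gaStar
  rw [Finset.sum_comm]
  refine Finset.sum_congr rfl fun p _ => ?_
  rw [MonoidAlgebra.coeff_sum, Finset.sum_apply']
  exact map_sum (MonoidAlgebra.singleAddHom p⁻¹) _ s

lemma gaStar_single (p : Equiv.Perm (Fin r)) (c : 𝕂) :
    gaStar (MonoidAlgebra.single p c) = MonoidAlgebra.single p⁻¹ c := by
  unfold gaStar
  rw [Finset.sum_eq_single p]
  · simp
  · intro q _ hq; simp [Finsupp.single_apply, (Ne.symm hq)]
  · simp

lemma gaStar_mul (x y : MonoidAlgebra 𝕂 (Equiv.Perm (Fin r))) :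
    gaStar (y * x) = gaStar x * gaStar y := by
  conv_lhs => rw [expand_ga x, expand_ga y]
  conv_rhs => rw [expand_ga x, expand_ga y]
  rw [Finset.sum_mul]
  simp_rw [Finset.mul_sum, MonoidAlgebra.single_mul_single, gaStar_sum, gaStar_single,
    Finset.sum_mul, Finset.mul_sum, MonoidAlgebra.single_mul_single]
  rw [Finset.sum_comm]
  refine Finset.sum_congr rfl fun p _ => Finset.sum_congr rfl fun q _ => ?_
  rw [mul_inv_rev, mul_comm]

lemma tb_apply_one (T : MultilinearMap 𝕂 (fun _ : Fin r => V) 𝕂) (b : Fin r → V) :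
    (tb T b).coeff 1 = T b := by
  unfold tb
  rw [MonoidAlgebra.coeff_sum, Finset.sum_apply', Finset.sum_eq_single (1 : Equiv.Perm (Fin r))]
  · simp
  · intro q _ hq; simp [Finsupp.single_apply, hq]
  · simp

lemma tb_gaAct (a : MonoidAlgebra 𝕂 (Equiv.Perm (Fin r)))
    (T : MultilinearMap 𝕂 (fun _ : Fin r => V) 𝕂) (b : Fin r → V) :
    tb (gaAct a T) b = tb T b * gaStar a := by
  unfold tb gaAct gaStar
  rw [Finset.sum_mul]
  simp_rw [Finset.mul_sum, MonoidAlgebra.single_mul_single,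
    MultilinearMap.sum_apply, MultilinearMap.smul_apply, MultilinearMap.domDomCongr_apply,
    Function.comp_def]
  have : ∀ p : Equiv.Perm (Fin r),
      (MonoidAlgebra.single p (∑ q : Equiv.Perm (Fin r), a.coeff q • T fun i => b (p (q i)))
        : MonoidAlgebra 𝕂 (Equiv.Perm (Fin r)))
      = ∑ q : Equiv.Perm (Fin r), MonoidAlgebra.single p (a.coeff q • T fun i => b (p (q i))) := by
    intro p
    exact map_sum (MonoidAlgebra.singleAddHom p) _ Finset.univ
  simp_rw [this]
  rw [Finset.sum_comm]
  conv_rhs => rw [Finset.sum_comm]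
  refine Finset.sum_congr rfl fun q _ => ?_
  refine Fintype.sum_equiv (Equiv.mulRight q) _ _ fun p => ?_
  simp only [Equiv.coe_mulRight, Equiv.Perm.mul_apply, mul_inv_cancel_right, smul_eq_mul,
    mul_comm]

end Aux

/-- For an idempotent `e ∈ 𝕂[S_r]`: `eT = T` iff all `T_b` lie in the left ideal
`𝕂[S_r]·e* = {x·e* : x ∈ 𝕂[S_r]}`. -/
theorem stmt9 {𝕂 : Type*} [RCLike 𝕂] {V : Type*} [AddCommGroup V] [Module 𝕂 V]
    {r : ℕ} (hr : 1 ≤ r)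
    (e : MonoidAlgebra 𝕂 (Equiv.Perm (Fin r))) (he : e * e = e)
    (T : MultilinearMap 𝕂 (fun _ : Fin r => V) 𝕂) :
    gaAct e T = T ↔
      ∀ b : Fin r → V, ∃ x : MonoidAlgebra 𝕂 (Equiv.Perm (Fin r)),
        tb T b = x * gaStar e := by
  constructor
  · intro h b
    have := tb_gaAct e T b
    rw [h] at this
    exact ⟨tb T b, this⟩
  · intro h
    ext b
    obtain ⟨x, hx⟩ := h b
    calc gaAct e T b = (tb (gaAct e T) b).coeff 1 := (tb_apply_one _ _).symm
      _ = (tb T b * gaStar e).coeff 1 := by rw [tb_gaAct]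
      _ = (x * (gaStar e * gaStar e)).coeff 1 := by rw [hx, mul_assoc]
      _ = (x * gaStar e).coeff 1 := by rw [← gaStar_mul, he]
      _ = T b := by rw [← hx, tb_apply_one]
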